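/- For every n ≥ 1 and every prime p, the exponent e_p(n) = ∑_{m=0}^{∞} ⌊(n−1)/(p^m(p−1))⌋ satisfies e_p(n) ≥ v_p(n!), the p-adic valuation of n!; consequently n! divides n!_ℙ = ∏_p p^{e_p(n)}. -/

import Mathlib

/-- The exponent of the prime `p` in the Bhargava factorial `n!_ℙ`. -/
def bhargavaExp (p n : ℕ) : ℕ := ∑ m ∈ Finset.range n, (n - 1) / (p ^ m * (p - 1))

/-- Bhargava's factorial of the set of primes. -/
def bhargavaPrimeFactorial (n : ℕ) : ℕ :=
  ∏ p ∈ (Finset.range (n + 1)).filter Nat.Prime, p ^ bhargavaExp p n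

lemma term_le (p n m : ℕ) (hp : p.Prime) : n / p ^ (m + 1) ≤ (n - 1) / (p ^ m * (p - 1)) := by
  obtain ⟨d, hd⟩ : ∃ d, p = d + 1 := ⟨p - 1, by have := hp.two_le; omega⟩
  subst hd
  set k := n / (d + 1) ^ (m + 1) with hk
  rcases Nat.eq_zero_or_pos k with h | h
  · simp [h]
  · have hq : 0 < (d + 1) ^ m := Nat.pow_pos (by omega)
    have hpos : 0 < (d + 1) ^ m * (d + 1 - 1) := by
      simp only [Nat.add_sub_cancel]
      have hd1 : 1 ≤ d := by have := hp.two_le; omega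
      exact Nat.mul_pos hq hd1
    rw [Nat.le_div_iff_mul_le hpos]
    have h1 : k * (d + 1) ^ (m + 1) ≤ n := Nat.div_mul_le_self n _
    simp only [Nat.add_sub_cancel]
    have hb : 1 ≤ k * (d + 1) ^ m := Nat.one_le_iff_ne_zero.mpr (by positivity)
    have hab : k * ((d + 1) ^ m * d) + k * (d + 1) ^ m = k * (d + 1) ^ (m + 1) := by ring
    set a := k * ((d + 1) ^ m * d)
    set b := k * (d + 1) ^ m
    omega

lemma key (n : ℕ) (hn : 1 ≤ n) (p : ℕ) (hp : p.Prime) :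
    (Nat.factorial n).factorization p ≤ bhargavaExp p n := by
  haveI : Fact p.Prime := ⟨hp⟩
  have hb : Nat.log p n < n + 1 := Nat.lt_succ_of_le (Nat.log_le_self p n)
  rw [Nat.factorization_def _ hp, padicValNat_factorial hb]
  have : ∑ i ∈ Finset.Ico 1 (n + 1), n / p ^ i = ∑ m ∈ Finset.range n, n / p ^ (m + 1) := by
    rw [Finset.range_eq_Ico, Finset.sum_Ico_eq_sum_range]
    simp [add_comm]
  rw [this, bhargavaExp]
  exact Finset.sum_le_sum fun m _ => term_le p n m hp

/-- For every `n ≥ 1` and every prime `p`, `e_p(n) ≥ v_p(n!)`; consequently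
`n!` divides `n!_ℙ`. -/
theorem factorial_dvd_bhargava_prime_factorial :
    ∀ n : ℕ, 1 ≤ n →
      (∀ p : ℕ, p.Prime → (Nat.factorial n).factorization p ≤ bhargavaExp p n) ∧
      Nat.factorial n ∣ bhargavaPrimeFactorial n := by
  intro n hn
  refine ⟨fun p hp => key n hn p hp, ?_⟩
  have hB : bhargavaPrimeFactorial n ≠ 0 := by
    apply Finset.prod_ne_zero_iff.mpr
    intro p hp
    exact pow_ne_zero _ (Nat.Prime.pos (Finset.mem_filter.mp hp).2).ne'
  rw [← Nat.factorization_le_iff_dvd (Nat.factorial_ne_zero n) hB]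
  intro q
  rcases Nat.eq_zero_or_pos ((Nat.factorial n).factorization q) with h | h
  · simp [h]
  have hq : q.Prime := by
    by_contra hq
    rw [Nat.factorization_eq_zero_of_not_prime _ hq] at h
    omega
  have hqn : q ≤ n := by
    by_contra hgt
    push_neg at hgt
    rw [Nat.factorization_factorial_eq_zero_of_lt hgt] at h
    exact absurd h (lt_irrefl 0)
  have hmem : q ∈ (Finset.range (n + 1)).filter Nat.Prime :=
    Finset.mem_filter.mpr ⟨Finset.mem_range.mpr (Nat.lt_succ_of_le hqn), hq⟩
  calc (Nat.factorial n).factorization q ≤ bhargavaExp q n := key n hn q hq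
    _ ≤ (bhargavaPrimeFactorial n).factorization q := by
        rw [bhargavaPrimeFactorial, Nat.factorization_prod
          (fun p hp => pow_ne_zero _ (Nat.Prime.pos (Finset.mem_filter.mp hp).2).ne'),
          Finset.sum_apply']
        have : bhargavaExp q n = ((q ^ bhargavaExp q n).factorization) q := by
          rw [Nat.Prime.factorization_pow hq]; simp
        rw [this]
        exact Finset.single_le_sum (f := fun p => (p ^ bhargavaExp p n).factorization q)
          (fun i _ => Nat.zero_le _) hmem
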